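/- If (x(t), v(t)) is a solution of the Hug ODE, then the tangential velocity component v_∥(t) = T(x(t))v(t) satisfies d/dt v_∥ = −N′_∥(x)[v_⊥]v_⊥ − N′_⊥(x)[v_∥]v_∥, where v_⊥(t) = N(x(t))v(t). -/

import Mathlib

open Matrix MeasureTheory

noncomputable section

abbrev Evec (n : ℕ) : Type := EuclideanSpace ℝ (Fin n)

/-- Apply a matrix to a vector of Euclidean space. -/
def mvE {m n : ℕ} (A : Matrix (Fin m) (Fin n) ℝ) (v : Evec n) : Evec m :=
  Matrix.toEuclideanLin A v

/-- Moore–Penrose pseudoinverse `Aᵀ(AAᵀ)⁻¹` of a full-rank wide matrix. -/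
def pinv {m n : ℕ} (A : Matrix (Fin m) (Fin n) ℝ) : Matrix (Fin n) (Fin m) ℝ :=
  Aᵀ * (A * Aᵀ)⁻¹

/-- Orthogonal projection onto the normal space: `N = A⁺A`. -/
def Nproj {m n : ℕ} (A : Matrix (Fin m) (Fin n) ℝ) : Matrix (Fin n) (Fin n) ℝ :=
  pinv A * A

/-- Orthogonal projection onto the tangent space: `T = I - N`. -/
def Tproj {m n : ℕ} (A : Matrix (Fin m) (Fin n) ℝ) : Matrix (Fin n) (Fin n) ℝ :=
  1 - Nproj A

/-- Reflection: `R = I - 2N`. -/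
def Rrefl {m n : ℕ} (A : Matrix (Fin m) (Fin n) ℝ) : Matrix (Fin n) (Fin n) ℝ :=
  1 - (2 : ℝ) • Nproj A

/-- Golub–Pereyra term `N′_⊥(x)[w] = J(x)⁺ H(x)[w,·] T(x)` (as a matrix),
built from the Jacobian matrix `A = J(x)` and the matrix `Hw = H(x)[w,·]`. -/
def Nperp' {m n : ℕ} (A Hw : Matrix (Fin m) (Fin n) ℝ) : Matrix (Fin n) (Fin n) ℝ :=
  pinv A * Hw * Tproj A

/-- Golub–Pereyra term `N′_∥(x)[w] = (N′_⊥(x)[w])ᵀ`. -/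
def Npar' {m n : ℕ} (A Hw : Matrix (Fin m) (Fin n) ℝ) : Matrix (Fin n) (Fin n) ℝ :=
  (Nperp' A Hw)ᵀ

/-- The right-hand side of the velocity equation of the Hug ODE:
`(N′_∥(x)[(T(x)−N(x))v] − N′_⊥(x)[(T(x)−N(x))v]) v`. -/
def hugVField {m n : ℕ} (J : Evec n → Matrix (Fin m) (Fin n) ℝ)
    (Hm : Evec n → Evec n → Matrix (Fin m) (Fin n) ℝ) (x v : Evec n) : Evec n :=
  mvE (Npar' (J x) (Hm x (mvE (Tproj (J x) - Nproj (J x)) v))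
      - Nperp' (J x) (Hm x (mvE (Tproj (J x) - Nproj (J x)) v))) v

attribute [local instance] Matrix.linftyOpNormedAddCommGroup Matrix.linftyOpNormedSpace
  Matrix.linftyOpNormedRing Matrix.linftyOpNormedAlgebra

section helpers
variable {a b c : ℕ}

lemma mvE_mul (A : Matrix (Fin a) (Fin b) ℝ) (B : Matrix (Fin b) (Fin c) ℝ) (v : Evec c) :
    mvE (A * B) v = mvE A (mvE B v) := by
  simp [mvE, Matrix.toEuclideanLin_apply, Matrix.mulVec_mulVec]

lemma mvE_add (A B : Matrix (Fin a) (Fin b) ℝ) (v : Evec b) :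
    mvE (A + B) v = mvE A v + mvE B v := by simp [mvE, map_add]

lemma mvE_sub (A B : Matrix (Fin a) (Fin b) ℝ) (v : Evec b) :
    mvE (A - B) v = mvE A v - mvE B v := by simp [mvE, map_sub]

lemma mvE_neg (A : Matrix (Fin a) (Fin b) ℝ) (v : Evec b) :
    mvE (-A) v = -mvE A v := by simp [mvE, map_neg]

def bilinCLM {E F G : Type*} [NormedAddCommGroup E] [NormedSpace ℝ E] [FiniteDimensional ℝ E]
    [NormedAddCommGroup F] [NormedSpace ℝ F] [FiniteDimensional ℝ F]
    [NormedAddCommGroup G] [NormedSpace ℝ G]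
    (bl : E →ₗ[ℝ] F →ₗ[ℝ] G) : E →L[ℝ] F →L[ℝ] G :=
  LinearMap.toContinuousLinearMap
    ((LinearMap.toContinuousLinearMap : (F →ₗ[ℝ] G) ≃ₗ[ℝ] (F →L[ℝ] G)).toLinearMap.comp bl)

lemma hasDerivAt_bilin {E F G : Type*} [NormedAddCommGroup E] [NormedSpace ℝ E]
    [FiniteDimensional ℝ E] [NormedAddCommGroup F] [NormedSpace ℝ F] [FiniteDimensional ℝ F]
    [NormedAddCommGroup G] [NormedSpace ℝ G]
    (bl : E →ₗ[ℝ] F →ₗ[ℝ] G) {t : ℝ} {u : ℝ → E} {u' : E} {w : ℝ → F} {w' : F}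
    (hu : HasDerivAt u u' t) (hw : HasDerivAt w w' t) :
    HasDerivAt (fun s => bl (u s) (w s)) (bl u' (w t) + bl (u t) w') t := by
  have h1 : HasDerivAt (fun s => bilinCLM bl (u s)) (bilinCLM bl u') t :=
    (bilinCLM bl).hasFDerivAt.comp_hasDerivAt t hu
  have h2 := h1.clm_apply hw
  simpa [bilinCLM, LinearMap.coe_toContinuousLinearMap'] using h2

def mulBL (a b c : ℕ) :
    Matrix (Fin a) (Fin b) ℝ →ₗ[ℝ] Matrix (Fin b) (Fin c) ℝ →ₗ[ℝ] Matrix (Fin a) (Fin c) ℝ :=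
  LinearMap.mk₂ ℝ (· * ·) (fun A B C => Matrix.add_mul A B C)
    (fun r A B => Matrix.smul_mul r A B) (fun A B C => Matrix.mul_add A B C)
    (fun r A B => Matrix.mul_smul A r B)

lemma hasDerivAt_matmul {t : ℝ} {M : ℝ → Matrix (Fin a) (Fin b) ℝ} {M' : Matrix (Fin a) (Fin b) ℝ}
    {P : ℝ → Matrix (Fin b) (Fin c) ℝ} {P' : Matrix (Fin b) (Fin c) ℝ}
    (hM : HasDerivAt M M' t) (hP : HasDerivAt P P' t) :
    HasDerivAt (fun s => M s * P s) (M' * P t + M t * P') t := by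
  have h := hasDerivAt_bilin (mulBL a b c) hM hP
  simp [mulBL] at h
  exact h

lemma hasDerivAt_mvE {t : ℝ} {M : ℝ → Matrix (Fin a) (Fin b) ℝ} {M' : Matrix (Fin a) (Fin b) ℝ}
    {u : ℝ → Evec b} {u' : Evec b} (hM : HasDerivAt M M' t) (hu : HasDerivAt u u' t) :
    HasDerivAt (fun s => mvE (M s) (u s)) (mvE M' (u t) + mvE (M t) u') t := by
  simpa [mvE] using hasDerivAt_bilin
    ((Matrix.toEuclideanLin :
      Matrix (Fin a) (Fin b) ℝ ≃ₗ[ℝ] (Evec b →ₗ[ℝ] Evec a)).toLinearMap) hM hu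

def transposeL (a b : ℕ) : Matrix (Fin a) (Fin b) ℝ →ₗ[ℝ] Matrix (Fin b) (Fin a) ℝ where
  toFun := Matrix.transpose
  map_add' := Matrix.transpose_add
  map_smul' := Matrix.transpose_smul

lemma hasDerivAt_transpose {t : ℝ} {M : ℝ → Matrix (Fin a) (Fin b) ℝ}
    {M' : Matrix (Fin a) (Fin b) ℝ} (hM : HasDerivAt M M' t) :
    HasDerivAt (fun s => (M s)ᵀ) M'ᵀ t := by
  have := (LinearMap.toContinuousLinearMap (transposeL a b)).hasFDerivAt.comp_hasDerivAt t hM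
  exact this

lemma hasDerivAt_matinv {k : ℕ} {t : ℝ} {G : ℝ → Matrix (Fin k) (Fin k) ℝ}
    {G' : Matrix (Fin k) (Fin k) ℝ} (hG : HasDerivAt G G' t) (hu : IsUnit (G t)) :
    HasDerivAt (fun s => (G s)⁻¹) (-((G t)⁻¹ * G' * (G t)⁻¹)) t := by
  have h1 := (hasFDerivAt_ringInverse (𝕜 := ℝ) hu.unit).comp_hasDerivAt t hG
  have h2 : (fun s => Ring.inverse (G s)) = fun s => (G s)⁻¹ := by
    funext s; rw [Matrix.nonsing_inv_eq_ringInverse]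
  have h3 : ((hu.unit⁻¹ : (Matrix (Fin k) (Fin k) ℝ)ˣ) : Matrix (Fin k) (Fin k) ℝ)
      = (G t)⁻¹ := by
    rw [Matrix.nonsing_inv_eq_ringInverse]
    conv_rhs => rw [← hu.unit_spec]
    rw [Ring.inverse_unit]
  simp only [Function.comp_def] at h1
  rw [h2] at h1
  refine h1.congr_deriv ?_
  simp [h3, Matrix.mul_assoc]

lemma isUnit_G {k p : ℕ} (A : Matrix (Fin k) (Fin p) ℝ) (h : A.rank = k) :
    IsUnit (A * Aᵀ) := by
  have h2 : (A * Aᵀ).rank = k := by rw [Matrix.rank_self_mul_transpose, h]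
  rw [← Matrix.mulVec_injective_iff_isUnit]
  have hrange : LinearMap.range (A * Aᵀ).mulVecLin = ⊤ := by
    apply Submodule.eq_top_of_finrank_eq
    rw [← Matrix.rank, h2]
    simp
  have hsurj : Function.Surjective (A * Aᵀ).mulVecLin :=
    LinearMap.range_eq_top.mp hrange
  have hinj : Function.Injective (A * Aᵀ).mulVecLin :=
    (LinearMap.injective_iff_surjective).mpr hsurj
  exact hinj

lemma key_algebra {m n : ℕ} (A H K : Matrix (Fin m) (Fin n) ℝ)
    (h1 : (A * Aᵀ) * (A * Aᵀ)⁻¹ = 1) (h2 : (A * Aᵀ)⁻¹ * (A * Aᵀ) = 1) :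
    -((Hᵀ * (A * Aᵀ)⁻¹ + Aᵀ * (-((A * Aᵀ)⁻¹ * (H * Aᵀ + A * Hᵀ) * (A * Aᵀ)⁻¹))) * A
        + pinv A * H)
      + Tproj A * (Npar' A (H - K) - Nperp' A (H - K))
    = -(Npar' A K * Nproj A) - Nperp' A H * Tproj A := by
  have hGl : ∀ {k : ℕ} (X : Matrix (Fin m) (Fin k) ℝ),
      A * (Aᵀ * ((A * Aᵀ)⁻¹ * X)) = X := by
    intro k X
    rw [← Matrix.mul_assoc, ← Matrix.mul_assoc, h1, Matrix.one_mul]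
  have hGr : ∀ {k : ℕ} (X : Matrix (Fin m) (Fin k) ℝ),
      (A * Aᵀ)⁻¹ * (A * (Aᵀ * X)) = X := by
    intro k X
    rw [← Matrix.mul_assoc, ← Matrix.mul_assoc, Matrix.mul_assoc ((A*Aᵀ)⁻¹), h2, Matrix.one_mul]
  have hGl1 : A * (Aᵀ * (A * Aᵀ)⁻¹) = 1 := by rw [← Matrix.mul_assoc, h1]
  have hGr1 : (A * Aᵀ)⁻¹ * (A * Aᵀ) = 1 := h2
  simp only [Npar', Nperp', Nproj, Tproj, pinv, transpose_mul, transpose_sub, transpose_one,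
    transpose_transpose, Matrix.transpose_nonsing_inv]
  simp only [Matrix.mul_sub, Matrix.sub_mul, Matrix.mul_add, Matrix.add_mul, Matrix.mul_one,
    Matrix.one_mul, Matrix.mul_assoc, Matrix.neg_mul, Matrix.mul_neg, neg_neg, neg_sub,
    hGl, hGr, hGl1, hGr1]
  abel

end helpers

theorem hug_ode_tangential_velocity_derivative
    (m n : ℕ) (hm : 0 < m) (hmn : m < n)
    (f : Evec n → Evec m) (hf : ContDiff ℝ (⊤ : ℕ∞) f)
    (J : Evec n → Matrix (Fin m) (Fin n) ℝ)
    (hJ : ∀ x, HasFDerivAt f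
      (LinearMap.toContinuousLinearMap (Matrix.toEuclideanLin (J x))) x)
    (hrank : ∀ x, (J x).rank = m)
    (Hm : Evec n → Evec n → Matrix (Fin m) (Fin n) ℝ)
    (hHm : ∀ (x w z : Evec n), mvE (Hm x w) z = iteratedFDeriv ℝ 2 f x ![w, z])
    (I : Set ℝ) (x v : ℝ → Evec n)
    (hx : ∀ t ∈ I, HasDerivAt x (mvE (Tproj (J (x t))) (v t)) t)
    (hv : ∀ t ∈ I, HasDerivAt v (hugVField J Hm (x t) (v t)) t)
    :
    ∀ t ∈ I,
      HasDerivAt (fun s : ℝ => mvE (Tproj (J (x s))) (v s))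
        (-(mvE (Npar' (J (x t)) (Hm (x t) (mvE (Nproj (J (x t))) (v t))))
            (mvE (Nproj (J (x t))) (v t)))
          - mvE (Nperp' (J (x t)) (Hm (x t) (mvE (Tproj (J (x t))) (v t))))
            (mvE (Tproj (J (x t))) (v t))) t := by
  intro t ht
  have hxd := hx t ht
  have hvd := hv t ht
  have hFcd : ContDiff ℝ (⊤ : ℕ∞) (fderiv ℝ f) := (contDiff_infty_iff_fderiv.mp hf).2
  -- the linear map extracting the matrix of a continuous linear map
  set L : (Evec n →L[ℝ] Evec m) →ₗ[ℝ] Matrix (Fin m) (Fin n) ℝ :=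
    (Matrix.toEuclideanLin.symm.toLinearMap).comp (ContinuousLinearMap.coeLM ℝ) with hL
  have hLJ : ∀ y, L (fderiv ℝ f y) = J y := by
    intro y
    rw [(hJ y).fderiv]
    simp [hL, LinearMap.coe_toContinuousLinearMap]
  have hFd : HasFDerivAt (fderiv ℝ f) (fderiv ℝ (fderiv ℝ f) (x t)) (x t) :=
    ((hFcd.differentiable (by simp)) (x t)).hasFDerivAt
  have h1 : HasDerivAt (fun s => fderiv ℝ f (x s))
      (fderiv ℝ (fderiv ℝ f) (x t) (mvE (Tproj (J (x t))) (v t))) t :=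
    hFd.comp_hasDerivAt t hxd
  have h4 : ∀ w : Evec n, L (fderiv ℝ (fderiv ℝ f) (x t) w) = Hm (x t) w := by
    intro w
    have hlin : Matrix.toEuclideanLin (Hm (x t) w)
        = ((fderiv ℝ (fderiv ℝ f) (x t) w : Evec n →L[ℝ] Evec m) : Evec n →ₗ[ℝ] Evec m) := by
      apply LinearMap.ext
      intro z
      have e1 := hHm (x t) w z
      simp only [mvE] at e1
      rw [e1, iteratedFDeriv_two_apply]
      simp
    simp [hL, ← hlin]
  have hJd : HasDerivAt (fun s => J (x s)) (Hm (x t) (mvE (Tproj (J (x t))) (v t))) t := by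
    have h2 := (LinearMap.toContinuousLinearMap L).hasFDerivAt.comp_hasDerivAt t h1
    simp only [Function.comp_def, LinearMap.coe_toContinuousLinearMap'] at h2
    change HasDerivAt (fun s => L (fderiv ℝ f (x s)))
      (L (fderiv ℝ (fderiv ℝ f) (x t) (mvE (Tproj (J (x t))) (v t)))) t at h2
    have h3 : (fun s => L (fderiv ℝ f (x s))) = fun s => J (x s) := funext fun s => hLJ (x s)
    rw [h3, h4] at h2
    exact h2
  -- invertibility of the Gram matrix
  have hGu : IsUnit (J (x t) * (J (x t))ᵀ) := isUnit_G _ (hrank (x t))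
  have hGdet : IsUnit (J (x t) * (J (x t))ᵀ).det := (Matrix.isUnit_iff_isUnit_det _).mp hGu
  have h1G : (J (x t) * (J (x t))ᵀ) * (J (x t) * (J (x t))ᵀ)⁻¹ = 1 :=
    Matrix.mul_nonsing_inv _ hGdet
  have h2G : (J (x t) * (J (x t))ᵀ)⁻¹ * (J (x t) * (J (x t))ᵀ) = 1 :=
    Matrix.nonsing_inv_mul _ hGdet
  -- derivative chain
  have hATd := hasDerivAt_transpose hJd
  have hGd := hasDerivAt_matmul hJd hATd
  have hGinv := hasDerivAt_matinv hGd hGu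
  have hPd := hasDerivAt_matmul hATd hGinv
  have hNd := hasDerivAt_matmul hPd hJd
  have hTd := hNd.const_sub (1 : Matrix (Fin n) (Fin n) ℝ)
  have hfinal := hasDerivAt_mvE hTd hvd
  -- linearity of `Hm` in its second argument
  have hHm_sub : ∀ a b : Evec n, Hm (x t) (a - b) = Hm (x t) a - Hm (x t) b := by
    intro a b
    apply Matrix.toEuclideanLin.injective
    apply LinearMap.ext
    intro z
    have e1 := hHm (x t) (a - b) z
    have e2 := hHm (x t) a z
    have e3 := hHm (x t) b z
    simp only [mvE] at e1 e2 e3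
    rw [map_sub, LinearMap.sub_apply, e1, e2, e3, iteratedFDeriv_two_apply,
      iteratedFDeriv_two_apply, iteratedFDeriv_two_apply]
    simp
  have hHsub : Hm (x t) (mvE (Tproj (J (x t)) - Nproj (J (x t))) (v t))
      = Hm (x t) (mvE (Tproj (J (x t))) (v t)) - Hm (x t) (mvE (Nproj (J (x t))) (v t)) := by
    rw [mvE_sub, hHm_sub]
  convert hfinal using 1
  · rfl
  simp only [hugVField, hHsub]
  conv_rhs => rw [← mvE_mul, ← mvE_add]
  conv_lhs => rw [← mvE_mul, ← mvE_mul, ← mvE_neg, ← mvE_sub]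
  exact congrArg (fun M => mvE M (v t))
    (key_algebra (J (x t)) (Hm (x t) (mvE (Tproj (J (x t))) (v t)))
      (Hm (x t) (mvE (Nproj (J (x t))) (v t))) h1G h2G).symm
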